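/- For an integer $n > 1$, the summatory function of $\varphi_n$ satisfies $\sum_{k \le x} \varphi_n(k) = \frac{x^{n+1}}{(n+1)\zeta(n+1)} + O(x^n)$ as $x \to \infty$, where $\varphi_n(k) = k^n \sum_{d \mid k} \mu(d)/d^n$. -/

import Mathlib

open Finset Filter

/-- `phiN n k = k^n * ∑_{d ∣ k} μ(d)/d^n`, as a real number. -/
noncomputable def phiN (n k : ℕ) : ℝ :=
  (k : ℝ) ^ n * ∑ d ∈ k.divisors, (ArithmeticFunction.moebius d : ℝ) / (d : ℝ) ^ n

namespace StmtAux

open ArithmeticFunction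

lemma pow_sub_pow_le_aux {a b : ℝ} (ha : 0 ≤ a) (hab : a ≤ b) (m : ℕ) :
    b ^ (m + 1) - a ^ (m + 1) ≤ ((m : ℝ) + 1) * b ^ m * (b - a) := by
  have hb : 0 ≤ b := ha.trans hab
  rw [← geom_sum₂_mul b a (m + 1)]
  have hsum : (∑ i ∈ Finset.range (m + 1), b ^ i * a ^ (m + 1 - 1 - i)) ≤ ((m : ℝ) + 1) * b ^ m := by
    calc (∑ i ∈ Finset.range (m + 1), b ^ i * a ^ (m + 1 - 1 - i))
        ≤ ∑ _i ∈ Finset.range (m + 1), b ^ m := by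
          apply Finset.sum_le_sum
          intro i hi
          simp only [Finset.mem_range] at hi
          have h1 : b ^ i * a ^ (m + 1 - 1 - i) ≤ b ^ i * b ^ (m + 1 - 1 - i) :=
            mul_le_mul_of_nonneg_left (pow_le_pow_left₀ ha hab _) (pow_nonneg hb _)
          calc b ^ i * a ^ (m + 1 - 1 - i) ≤ b ^ i * b ^ (m + 1 - 1 - i) := h1
            _ = b ^ m := by rw [← pow_add]; congr 1; omega
      _ = ((m : ℝ) + 1) * b ^ m := by
          rw [Finset.sum_const, Finset.card_range, nsmul_eq_mul]; push_cast; ring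
  have h2 : (0 : ℝ) ≤ b - a := sub_nonneg.mpr hab
  exact mul_le_mul_of_nonneg_right hsum h2

lemma le_pow_sub_pow_aux {a b : ℝ} (ha : 0 ≤ a) (hab : a ≤ b) (m : ℕ) :
    ((m : ℝ) + 1) * a ^ m * (b - a) ≤ b ^ (m + 1) - a ^ (m + 1) := by
  rw [← geom_sum₂_mul b a (m + 1)]
  have hsum : ((m : ℝ) + 1) * a ^ m ≤ ∑ i ∈ Finset.range (m + 1), b ^ i * a ^ (m + 1 - 1 - i) := by
    calc ((m : ℝ) + 1) * a ^ m = ∑ _i ∈ Finset.range (m + 1), a ^ m := by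
          rw [Finset.sum_const, Finset.card_range, nsmul_eq_mul]; push_cast; ring
      _ ≤ ∑ i ∈ Finset.range (m + 1), b ^ i * a ^ (m + 1 - 1 - i) := by
          apply Finset.sum_le_sum
          intro i hi
          simp only [Finset.mem_range] at hi
          have h1 : a ^ i * a ^ (m + 1 - 1 - i) ≤ b ^ i * a ^ (m + 1 - 1 - i) :=
            mul_le_mul_of_nonneg_right (pow_le_pow_left₀ ha hab _) (pow_nonneg ha _)
          calc a ^ m = a ^ i * a ^ (m + 1 - 1 - i) := by rw [← pow_add]; congr 1; omega
            _ ≤ b ^ i * a ^ (m + 1 - 1 - i) := h1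
  have h2 : (0 : ℝ) ≤ b - a := sub_nonneg.mpr hab
  exact mul_le_mul_of_nonneg_right hsum h2

lemma sumpow_bound (n : ℕ) (m : ℕ) :
    0 ≤ (∑ q ∈ Icc 1 m, (q : ℝ) ^ n) - (m : ℝ) ^ (n + 1) / ((n : ℝ) + 1) ∧
      (∑ q ∈ Icc 1 m, (q : ℝ) ^ n) - (m : ℝ) ^ (n + 1) / ((n : ℝ) + 1) ≤ (m : ℝ) ^ n := by
  induction m with
  | zero => simp
  | succ m ih =>
    obtain ⟨ih1, ih2⟩ := ih
    have hc : (0 : ℝ) < (n : ℝ) + 1 := by positivity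
    have ha : (0 : ℝ) ≤ (m : ℝ) := Nat.cast_nonneg m
    have hab : (m : ℝ) ≤ (m : ℝ) + 1 := by linarith
    have hup := pow_sub_pow_le_aux ha hab n
    have hlow := le_pow_sub_pow_aux ha hab n
    have h1 : ((m : ℝ) + 1) - (m : ℝ) = 1 := by ring
    rw [h1, mul_one] at hup hlow
    have hA : (((m : ℝ) + 1) ^ (n + 1) - (m : ℝ) ^ (n + 1)) / ((n : ℝ) + 1)
        ≤ ((m : ℝ) + 1) ^ n := by
      rw [div_le_iff₀ hc]; linarith
    have hB : (m : ℝ) ^ n ≤ (((m : ℝ) + 1) ^ (n + 1) - (m : ℝ) ^ (n + 1)) / ((n : ℝ) + 1) := by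
      rw [le_div_iff₀ hc]; linarith
    have hsub := sub_div (((m : ℝ) + 1) ^ (n + 1)) ((m : ℝ) ^ (n + 1)) ((n : ℝ) + 1)
    rw [Finset.sum_Icc_succ_top (by omega : 1 ≤ m + 1)]
    push_cast
    constructor <;> linarith

lemma swap_sum (x : ℕ) (F : ℕ → ℕ → ℝ) :
    ∑ k ∈ Icc 1 x, ∑ p ∈ k.divisorsAntidiagonal, F p.1 p.2
      = ∑ d ∈ Icc 1 x, ∑ q ∈ Icc 1 (x / d), F d q := by
  rw [Finset.sum_sigma', Finset.sum_sigma']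
  refine Finset.sum_nbij' (fun p => ⟨p.2.1, p.2.2⟩) (fun p => ⟨p.1 * p.2, (p.1, p.2)⟩)
    ?_ ?_ ?_ ?_ ?_
  · rintro ⟨k, d, q⟩ h
    simp only [Finset.mem_sigma, Finset.mem_Icc, Nat.mem_divisorsAntidiagonal] at h ⊢
    obtain ⟨⟨hk1, hk2⟩, hdq, hk0⟩ := h
    have hd : d ≠ 0 := by rintro rfl; rw [zero_mul] at hdq; omega
    have hq : q ≠ 0 := by rintro rfl; rw [mul_zero] at hdq; omega
    refine ⟨⟨by omega, ?_⟩, by omega, ?_⟩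
    · calc d ≤ d * q := Nat.le_mul_of_pos_right d (by omega)
        _ ≤ x := by omega
    · rw [Nat.le_div_iff_mul_le (by omega : 0 < d)]
      calc q * d = d * q := by ring
        _ ≤ x := by omega
  · rintro ⟨d, q⟩ h
    simp only [Finset.mem_sigma, Finset.mem_Icc] at h
    obtain ⟨⟨hd1, hd2⟩, hq1, hq2⟩ := h
    have hdq : d * q ≤ x := by
      have h3 := (Nat.le_div_iff_mul_le (show 0 < d by omega)).mp hq2
      calc d * q = q * d := by ring
        _ ≤ x := h3
    refine Finset.mem_sigma.mpr ⟨Finset.mem_Icc.mpr ⟨?_, hdq⟩,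
      Nat.mem_divisorsAntidiagonal.mpr ⟨rfl, ?_⟩⟩
    · exact Nat.one_le_iff_ne_zero.mpr
        (Nat.mul_ne_zero (by omega : d ≠ 0) (by omega : q ≠ 0))
    · exact Nat.mul_ne_zero (by omega : d ≠ 0) (by omega : q ≠ 0)
  · rintro ⟨k, d, q⟩ h
    simp only [Finset.mem_sigma, Finset.mem_Icc, Nat.mem_divisorsAntidiagonal] at h
    obtain ⟨-, hdq, -⟩ := h
    subst hdq
    rfl
  · rintro ⟨d, q⟩ _
    rfl
  · rintro ⟨k, d, q⟩ _
    rfl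

lemma phiN_eq (n : ℕ) (hn : 0 < n) (k : ℕ) :
    phiN n k = ∑ p ∈ k.divisorsAntidiagonal, (moebius p.1 : ℝ) * (p.2 : ℝ) ^ n := by
  rcases Nat.eq_zero_or_pos k with rfl | hk
  · simp [phiN, zero_pow hn.ne']
  · rw [Nat.sum_divisorsAntidiagonal (f := fun d q => (moebius d : ℝ) * (q : ℝ) ^ n)]
    rw [phiN, Finset.mul_sum]
    refine Finset.sum_congr rfl fun d hd => ?_
    rw [Nat.mem_divisors] at hd
    have hd0 : d ≠ 0 := by
      rintro rfl
      exact absurd (Nat.eq_zero_of_zero_dvd hd.1) (by omega)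
    have hcast : ((k / d : ℕ) : ℝ) = (k : ℝ) / (d : ℝ) :=
      Nat.cast_div hd.1 (Nat.cast_ne_zero.mpr hd0)
    rw [hcast, div_pow]
    ring

lemma moebius_abs_le (d : ℕ) : |(moebius d : ℝ)| ≤ 1 := by
  have h := ArithmeticFunction.abs_moebius_le_one (n := d)
  calc |(moebius d : ℝ)| = ((|moebius d| : ℤ) : ℝ) := by push_cast; ring
    _ ≤ 1 := by exact_mod_cast h

lemma moebius_norm_le (n d : ℕ) :
    ‖(moebius d : ℝ) / (d : ℝ) ^ (n + 1)‖ ≤ ((d : ℝ) ^ (n + 1))⁻¹ := by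
  rcases Nat.eq_zero_or_pos d with rfl | hd
  · simp [ArithmeticFunction.map_zero]
  · rw [Real.norm_eq_abs, abs_div, abs_of_nonneg (by positivity : (0:ℝ) ≤ (d:ℝ) ^ (n+1)),
      div_eq_mul_inv]
    calc |(moebius d : ℝ)| * ((d : ℝ) ^ (n + 1))⁻¹ ≤ 1 * ((d : ℝ) ^ (n + 1))⁻¹ :=
          mul_le_mul_of_nonneg_right (moebius_abs_le d) (by positivity)
      _ = ((d : ℝ) ^ (n + 1))⁻¹ := one_mul _

lemma summable_moebius_div (n : ℕ) (hn : 1 < n) :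
    Summable (fun d : ℕ => (moebius d : ℝ) / (d : ℝ) ^ (n + 1)) :=
  Summable.of_norm_bounded (g := fun d : ℕ => ((d : ℝ) ^ (n + 1))⁻¹)
    (Real.summable_nat_pow_inv.mpr (by omega)) fun d => moebius_norm_le n d

lemma tail_inv_sq (x : ℕ) (hx : 1 ≤ x) :
    (∑' i : ℕ, (((i + (x + 1) : ℕ) : ℝ) ^ 2)⁻¹) ≤ 2 / (x : ℝ) := by
  have hsummable : Summable (fun i : ℕ => (((i + (x + 1) : ℕ) : ℝ) ^ 2)⁻¹) := by
    have h := (summable_nat_add_iff (f := fun d : ℕ => ((d : ℝ) ^ 2)⁻¹) (x + 1)).mpr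
      (Real.summable_nat_pow_inv.mpr one_lt_two)
    exact h.congr fun i => by norm_num
  have hbound : ∀ s : Finset ℕ,
      (∑ i ∈ s, (((i + (x + 1) : ℕ) : ℝ) ^ 2)⁻¹) ≤ 2 / ((x : ℝ) + 1) := by
    intro s
    obtain ⟨N, hN⟩ := s.exists_nat_subset_range
    calc (∑ i ∈ s, (((i + (x + 1) : ℕ) : ℝ) ^ 2)⁻¹)
        ≤ ∑ i ∈ Finset.range N, (((i + (x + 1) : ℕ) : ℝ) ^ 2)⁻¹ :=
          Finset.sum_le_sum_of_subset_of_nonneg hN (fun i _ _ => by positivity)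
      _ = ∑ d ∈ Finset.Ico (x + 1) (x + 1 + N), ((d : ℝ) ^ 2)⁻¹ := by
          rw [Finset.sum_Ico_eq_sum_range]
          simp only [Nat.add_sub_cancel_left]
          exact Finset.sum_congr rfl fun i _ => by rw [Nat.add_comm (x + 1) i]
      _ = ∑ d ∈ Finset.Ioo x (x + 1 + N), ((d : ℝ) ^ 2)⁻¹ := by
          rw [Finset.Ico_add_one_left_eq_Ioo]
      _ ≤ 2 / ((x : ℝ) + 1) := by
          have h := sum_Ioo_inv_sq_le (α := ℝ) x (x + 1 + N)
          simpa using h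
  calc (∑' i : ℕ, (((i + (x + 1) : ℕ) : ℝ) ^ 2)⁻¹) ≤ 2 / ((x : ℝ) + 1) :=
        Summable.tsum_le_of_sum_le hsummable hbound
    _ ≤ 2 / (x : ℝ) := by
        apply div_le_div_of_nonneg_left (by norm_num) (by positivity)
        linarith

lemma tail_bound (n x : ℕ) (hn : 1 < n) (hx : 1 ≤ x) :
    |(∑ d ∈ Icc 1 x, (moebius d : ℝ) / (d : ℝ) ^ (n + 1))
      - ∑' d : ℕ, (moebius d : ℝ) / (d : ℝ) ^ (n + 1)| ≤ 2 / (x : ℝ) := by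
  set f : ℕ → ℝ := fun d => (moebius d : ℝ) / (d : ℝ) ^ (n + 1) with hf
  have hsum : Summable f := summable_moebius_div n hn
  have key := Summable.sum_add_tsum_nat_add (f := f) (x + 1) hsum
  have hsplit : (∑ i ∈ Finset.range (x + 1), f i) = ∑ d ∈ Icc 1 x, f d := by
    have h0 : Finset.range (x + 1) = insert 0 (Icc 1 x) := by
      ext i; simp [Nat.lt_succ_iff]; omega
    rw [h0, Finset.sum_insert (by simp)]
    have hf0 : f 0 = 0 := by simp [hf, ArithmeticFunction.map_zero]
    rw [hf0, zero_add]
  have heq : (∑ d ∈ Icc 1 x, f d) - (∑' d : ℕ, f d) = -∑' i : ℕ, f (i + (x + 1)) := by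
    rw [← hsplit]; linarith [key]
  rw [heq, abs_neg]
  have hnorm : ∀ i : ℕ, ‖f (i + (x + 1))‖ ≤ (((i + (x + 1) : ℕ) : ℝ) ^ 2)⁻¹ := by
    intro i
    set d : ℕ := i + (x + 1) with hd
    have hd1 : 1 ≤ d := by omega
    have hd1' : (1 : ℝ) ≤ (d : ℝ) := by exact_mod_cast hd1
    have hpow : ((d : ℝ)) ^ 2 ≤ (d : ℝ) ^ (n + 1) := pow_le_pow_right₀ hd1' (by omega)
    have h2 : ((d : ℝ) ^ (n + 1))⁻¹ ≤ ((d : ℝ) ^ 2)⁻¹ :=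
      inv_anti₀ (by positivity) hpow
    exact (moebius_norm_le n d).trans h2
  have hsummable_norm : Summable (fun i : ℕ => ‖f (i + (x + 1))‖) := by
    have h := (summable_nat_add_iff (f := fun d : ℕ => ‖f d‖) (x + 1)).mpr
      (Summable.of_nonneg_of_le (fun d => norm_nonneg _) (fun d => moebius_norm_le n d)
        (Real.summable_nat_pow_inv.mpr (by omega)))
    exact h
  have hsummable_sq : Summable (fun i : ℕ => (((i + (x + 1) : ℕ) : ℝ) ^ 2)⁻¹) := by
    have h := (summable_nat_add_iff (f := fun d : ℕ => ((d : ℝ) ^ 2)⁻¹) (x + 1)).mpr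
      (Real.summable_nat_pow_inv.mpr one_lt_two)
    exact h.congr fun i => by norm_num
  calc |∑' i : ℕ, f (i + (x + 1))| ≤ ∑' i : ℕ, ‖f (i + (x + 1))‖ := by
        rw [← Real.norm_eq_abs]; exact norm_tsum_le_tsum_norm hsummable_norm
    _ ≤ ∑' i : ℕ, (((i + (x + 1) : ℕ) : ℝ) ^ 2)⁻¹ :=
        Summable.tsum_le_tsum hnorm hsummable_norm hsummable_sq
    _ ≤ 2 / (x : ℝ) := tail_inv_sq x hx

lemma zeta_mul_moebius (n : ℕ) (hn : 1 < n) :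
    (∑' d : ℕ, ((d : ℝ) ^ (n + 1))⁻¹) * (∑' d : ℕ, (moebius d : ℝ) / (d : ℝ) ^ (n + 1)) = 1 := by
  have hs : 1 < (((n + 1 : ℕ) : ℂ)).re := by
    rw [Complex.natCast_re]
    exact_mod_cast (by omega : 1 < n + 1)
  have key := ArithmeticFunction.LSeries_zeta_mul_Lseries_moebius (s := ((n + 1 : ℕ) : ℂ)) hs
  have hz : LSeries (fun k : ℕ => ((ArithmeticFunction.zeta k : ℕ) : ℂ)) ((n + 1 : ℕ) : ℂ)
      = (((∑' d : ℕ, ((d : ℝ) ^ (n + 1))⁻¹ : ℝ)) : ℂ) := by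
    rw [Complex.ofReal_tsum]
    refine tsum_congr fun k => ?_
    rcases eq_or_ne k 0 with rfl | hk
    · simp [LSeries.term]
    · rw [LSeries.term_of_ne_zero hk, ArithmeticFunction.zeta_apply_ne hk,
        Complex.cpow_natCast]
      push_cast
      rw [one_div]
  have hm : LSeries (fun k : ℕ => ((moebius k : ℤ) : ℂ)) ((n + 1 : ℕ) : ℂ)
      = (((∑' d : ℕ, (moebius d : ℝ) / (d : ℝ) ^ (n + 1) : ℝ)) : ℂ) := by
    rw [Complex.ofReal_tsum]
    refine tsum_congr fun k => ?_
    rcases eq_or_ne k 0 with rfl | hk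
    · simp [LSeries.term, ArithmeticFunction.map_zero]
    · rw [LSeries.term_of_ne_zero hk, Complex.cpow_natCast]
      push_cast
      ring
  rw [hz, hm] at key
  exact_mod_cast key

end StmtAux

theorem stmt2 (n : ℕ) (hn : 1 < n) :
    (fun x : ℕ =>
        (∑ k ∈ Finset.Icc 1 x, phiN n k) -
          (x : ℝ) ^ (n + 1) / (((n : ℝ) + 1) * ∑' k : ℕ, 1 / ((k : ℝ) + 1) ^ (n + 1)))
      =O[atTop] fun x : ℕ => (x : ℝ) ^ n := by
  classical
  have hn0 : 0 < n := by omega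
  set μ := ArithmeticFunction.moebius with hμ
  set Z : ℝ := ∑' k : ℕ, 1 / ((k : ℝ) + 1) ^ (n + 1) with hZdef
  set C : ℝ := ∑' d : ℕ, ((d : ℝ) ^ n)⁻¹ with hCdef
  set M : ℝ := ∑' d : ℕ, (μ d : ℝ) / (d : ℝ) ^ (n + 1) with hMdef
  have hsumZ' : Summable (fun d : ℕ => ((d : ℝ) ^ (n + 1))⁻¹) :=
    Real.summable_nat_pow_inv.mpr (by omega)
  have hsumC : Summable (fun d : ℕ => ((d : ℝ) ^ n)⁻¹) :=
    Real.summable_nat_pow_inv.mpr hn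
  have hZ'_eq : (∑' d : ℕ, ((d : ℝ) ^ (n + 1))⁻¹) = Z := by
    rw [Summable.tsum_eq_zero_add hsumZ', hZdef]
    rw [Nat.cast_zero, zero_pow (by omega : n + 1 ≠ 0), inv_zero, zero_add]
    exact tsum_congr fun k => by push_cast; rw [one_div]
  have hZ1 : (1 : ℝ) ≤ ∑' d : ℕ, ((d : ℝ) ^ (n + 1))⁻¹ := by
    have h := Summable.le_tsum hsumZ' 1 (fun j _ => by positivity)
    simpa using h
  have hZpos : (0 : ℝ) < Z := by rw [← hZ'_eq]; linarith
  have hMZ : Z * M = 1 := by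
    rw [← hZ'_eq]; exact StmtAux.zeta_mul_moebius n hn
  have hMval : M = 1 / Z := eq_one_div_of_mul_eq_one_left (by linarith [hMZ] : M * Z = 1)
  have hC0 : (0 : ℝ) ≤ C := by
    rw [hCdef]; exact tsum_nonneg fun d => by positivity
  rw [Asymptotics.isBigO_iff]
  refine ⟨2 * C + 2, ?_⟩
  filter_upwards [eventually_ge_atTop 1] with x hx
  have hx0 : (0 : ℝ) < (x : ℝ) := by exact_mod_cast Nat.lt_of_lt_of_le Nat.zero_lt_one hx
  have hxn : (0 : ℝ) ≤ (x : ℝ) ^ n := by positivity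
  rw [Real.norm_eq_abs, Real.norm_eq_abs, abs_of_nonneg hxn]
  -- step 1 : expand phiN and swap the order of summation
  have hstep1 : (∑ k ∈ Finset.Icc 1 x, phiN n k)
      = ∑ d ∈ Icc 1 x, (μ d : ℝ) * ∑ q ∈ Icc 1 (x / d), (q : ℝ) ^ n := by
    rw [Finset.sum_congr rfl fun k _ => StmtAux.phiN_eq n hn0 k,
      StmtAux.swap_sum x (fun d q => (μ d : ℝ) * (q : ℝ) ^ n)]
    exact Finset.sum_congr rfl fun d _ => (Finset.mul_sum _ _ _).symm
  set P : ℝ := ∑ d ∈ Icc 1 x, (μ d : ℝ) / (d : ℝ) ^ (n + 1) with hPdef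
  have hsplit : (∑ k ∈ Finset.Icc 1 x, phiN n k) - (x : ℝ) ^ (n + 1) / (((n : ℝ) + 1) * Z)
      = (∑ d ∈ Icc 1 x, (μ d : ℝ) *
          ((∑ q ∈ Icc 1 (x / d), (q : ℝ) ^ n) - ((x / d : ℕ) : ℝ) ^ (n + 1) / ((n : ℝ) + 1)))
        + (∑ d ∈ Icc 1 x, (μ d : ℝ) *
            ((((x / d : ℕ) : ℝ) ^ (n + 1) - ((x : ℝ) / (d : ℝ)) ^ (n + 1)) / ((n : ℝ) + 1)))
        + (x : ℝ) ^ (n + 1) / ((n : ℝ) + 1) * (P - M) := by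
    have h1 : (x : ℝ) ^ (n + 1) / (((n : ℝ) + 1) * Z)
        = (x : ℝ) ^ (n + 1) / ((n : ℝ) + 1) * M := by
      have hZne : Z ≠ 0 := ne_of_gt hZpos
      have hne : ((n : ℝ) + 1) ≠ 0 := by positivity
      rw [hMval]
      field_simp
    have h2 : (x : ℝ) ^ (n + 1) / ((n : ℝ) + 1) * P
        = ∑ d ∈ Icc 1 x, (μ d : ℝ) * (((x : ℝ) / (d : ℝ)) ^ (n + 1) / ((n : ℝ) + 1)) := by
      rw [hPdef, Finset.mul_sum]
      refine Finset.sum_congr rfl fun d hd => ?_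
      rw [Finset.mem_Icc] at hd
      have hd0 : (d : ℝ) ≠ 0 := Nat.cast_ne_zero.mpr (by omega)
      rw [div_pow]
      field_simp
    have h4 : (∑ d ∈ Icc 1 x, (μ d : ℝ) * ∑ q ∈ Icc 1 (x / d), (q : ℝ) ^ n)
        = (∑ d ∈ Icc 1 x, (μ d : ℝ) *
            ((∑ q ∈ Icc 1 (x / d), (q : ℝ) ^ n) - ((x / d : ℕ) : ℝ) ^ (n + 1) / ((n : ℝ) + 1)))
          + (∑ d ∈ Icc 1 x, (μ d : ℝ) *
              ((((x / d : ℕ) : ℝ) ^ (n + 1) - ((x : ℝ) / (d : ℝ)) ^ (n + 1)) / ((n : ℝ) + 1)))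
          + ∑ d ∈ Icc 1 x, (μ d : ℝ) * (((x : ℝ) / (d : ℝ)) ^ (n + 1) / ((n : ℝ) + 1)) := by
      rw [← Finset.sum_add_distrib, ← Finset.sum_add_distrib]
      exact Finset.sum_congr rfl fun d _ => by ring
    rw [hstep1, h1, h4, ← h2]
    ring
  -- bounds
  have hdivsum : (∑ d ∈ Icc 1 x, ((x : ℝ) / (d : ℝ)) ^ n) ≤ (x : ℝ) ^ n * C := by
    have he : (∑ d ∈ Icc 1 x, ((x : ℝ) / (d : ℝ)) ^ n)
        = (x : ℝ) ^ n * ∑ d ∈ Icc 1 x, ((d : ℝ) ^ n)⁻¹ := by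
      rw [Finset.mul_sum]
      exact Finset.sum_congr rfl fun d _ => by rw [div_pow, div_eq_mul_inv]
    rw [he, hCdef]
    exact mul_le_mul_of_nonneg_left
      (Summable.sum_le_tsum (Icc 1 x) (fun i _ => by positivity) hsumC) hxn
  have hbound1 : |∑ d ∈ Icc 1 x, (μ d : ℝ) *
      ((∑ q ∈ Icc 1 (x / d), (q : ℝ) ^ n) - ((x / d : ℕ) : ℝ) ^ (n + 1) / ((n : ℝ) + 1))|
      ≤ (x : ℝ) ^ n * C := by
    calc |∑ d ∈ Icc 1 x, (μ d : ℝ) *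
        ((∑ q ∈ Icc 1 (x / d), (q : ℝ) ^ n) - ((x / d : ℕ) : ℝ) ^ (n + 1) / ((n : ℝ) + 1))|
        ≤ ∑ d ∈ Icc 1 x, |(μ d : ℝ) *
            ((∑ q ∈ Icc 1 (x / d), (q : ℝ) ^ n) - ((x / d : ℕ) : ℝ) ^ (n + 1) / ((n : ℝ) + 1))| :=
          Finset.abs_sum_le_sum_abs _ _
      _ ≤ ∑ d ∈ Icc 1 x, ((x : ℝ) / (d : ℝ)) ^ n := by
          refine Finset.sum_le_sum fun d hd => ?_
          obtain ⟨hA1, hA2⟩ := StmtAux.sumpow_bound n (x / d)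
          have habsA : |(∑ q ∈ Icc 1 (x / d), (q : ℝ) ^ n)
              - ((x / d : ℕ) : ℝ) ^ (n + 1) / ((n : ℝ) + 1)| ≤ ((x / d : ℕ) : ℝ) ^ n :=
            abs_le.mpr ⟨by linarith, hA2⟩
          have hfl : ((x / d : ℕ) : ℝ) ≤ (x : ℝ) / (d : ℝ) := Nat.cast_div_le
          have hfl' : ((x / d : ℕ) : ℝ) ^ n ≤ ((x : ℝ) / (d : ℝ)) ^ n :=
            pow_le_pow_left₀ (Nat.cast_nonneg _) hfl n
          calc |(μ d : ℝ) * ((∑ q ∈ Icc 1 (x / d), (q : ℝ) ^ n)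
              - ((x / d : ℕ) : ℝ) ^ (n + 1) / ((n : ℝ) + 1))|
              = |(μ d : ℝ)| * |(∑ q ∈ Icc 1 (x / d), (q : ℝ) ^ n)
                - ((x / d : ℕ) : ℝ) ^ (n + 1) / ((n : ℝ) + 1)| := abs_mul _ _
            _ ≤ 1 * ((x / d : ℕ) : ℝ) ^ n :=
                mul_le_mul (StmtAux.moebius_abs_le d) habsA (abs_nonneg _) zero_le_one
            _ ≤ ((x : ℝ) / (d : ℝ)) ^ n := by rw [one_mul]; exact hfl'
      _ ≤ (x : ℝ) ^ n * C := hdivsum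
  have hbound2 : |∑ d ∈ Icc 1 x, (μ d : ℝ) *
      ((((x / d : ℕ) : ℝ) ^ (n + 1) - ((x : ℝ) / (d : ℝ)) ^ (n + 1)) / ((n : ℝ) + 1))|
      ≤ (x : ℝ) ^ n * C := by
    calc |∑ d ∈ Icc 1 x, (μ d : ℝ) *
        ((((x / d : ℕ) : ℝ) ^ (n + 1) - ((x : ℝ) / (d : ℝ)) ^ (n + 1)) / ((n : ℝ) + 1))|
        ≤ ∑ d ∈ Icc 1 x, |(μ d : ℝ) *
            ((((x / d : ℕ) : ℝ) ^ (n + 1) - ((x : ℝ) / (d : ℝ)) ^ (n + 1)) / ((n : ℝ) + 1))| :=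
          Finset.abs_sum_le_sum_abs _ _
      _ ≤ ∑ d ∈ Icc 1 x, ((x : ℝ) / (d : ℝ)) ^ n := by
          refine Finset.sum_le_sum fun d hd => ?_
          rw [Finset.mem_Icc] at hd
          have hdpos : (0 : ℝ) < (d : ℝ) := by exact_mod_cast (by omega : 0 < d)
          have hcpos : (0 : ℝ) < (n : ℝ) + 1 := by positivity
          have hF0 : (0 : ℝ) ≤ ((x / d : ℕ) : ℝ) := Nat.cast_nonneg _
          have hFG : ((x / d : ℕ) : ℝ) ≤ (x : ℝ) / (d : ℝ) := Nat.cast_div_le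
          have hG0 : (0 : ℝ) ≤ (x : ℝ) / (d : ℝ) := hF0.trans hFG
          have hGF1 : (x : ℝ) / (d : ℝ) ≤ ((x / d : ℕ) : ℝ) + 1 := by
            rw [div_le_iff₀ hdpos]
            have hlt : x < d * (x / d) + d := by
              have h := Nat.div_add_mod x d
              have h2 := Nat.mod_lt x (show 0 < d by omega)
              omega
            have hlt' : (x : ℝ) < (d : ℝ) * ((x / d : ℕ) : ℝ) + (d : ℝ) := by
              exact_mod_cast hlt
            nlinarith
          have hgap := StmtAux.pow_sub_pow_le_aux hF0 hFG n
          have hgap2 : ((x : ℝ) / (d : ℝ)) ^ (n + 1) - ((x / d : ℕ) : ℝ) ^ (n + 1)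
              ≤ ((n : ℝ) + 1) * ((x : ℝ) / (d : ℝ)) ^ n := by
            have hd1 : (x : ℝ) / (d : ℝ) - ((x / d : ℕ) : ℝ) ≤ 1 := by linarith
            have h5 : ((n : ℝ) + 1) * ((x : ℝ) / (d : ℝ)) ^ n *
                ((x : ℝ) / (d : ℝ) - ((x / d : ℕ) : ℝ))
                ≤ ((n : ℝ) + 1) * ((x : ℝ) / (d : ℝ)) ^ n * 1 :=
              mul_le_mul_of_nonneg_left hd1 (by positivity)
            linarith
          have hmono : ((x / d : ℕ) : ℝ) ^ (n + 1) ≤ ((x : ℝ) / (d : ℝ)) ^ (n + 1) :=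
            pow_le_pow_left₀ hF0 hFG (n + 1)
          have habsB : |(((x / d : ℕ) : ℝ) ^ (n + 1) - ((x : ℝ) / (d : ℝ)) ^ (n + 1))
              / ((n : ℝ) + 1)| ≤ ((x : ℝ) / (d : ℝ)) ^ n := by
            rw [abs_div, abs_of_pos hcpos, abs_sub_comm,
              abs_of_nonneg (sub_nonneg.mpr hmono), div_le_iff₀ hcpos]
            linarith [hgap2]
          calc |(μ d : ℝ) * ((((x / d : ℕ) : ℝ) ^ (n + 1) - ((x : ℝ) / (d : ℝ)) ^ (n + 1))
              / ((n : ℝ) + 1))|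
              = |(μ d : ℝ)| * |(((x / d : ℕ) : ℝ) ^ (n + 1) - ((x : ℝ) / (d : ℝ)) ^ (n + 1))
                / ((n : ℝ) + 1)| := abs_mul _ _
            _ ≤ 1 * ((x : ℝ) / (d : ℝ)) ^ n :=
                mul_le_mul (StmtAux.moebius_abs_le d) habsB (abs_nonneg _) zero_le_one
            _ = ((x : ℝ) / (d : ℝ)) ^ n := one_mul _
      _ ≤ (x : ℝ) ^ n * C := hdivsum
  have hbound3 : |(x : ℝ) ^ (n + 1) / ((n : ℝ) + 1) * (P - M)| ≤ 2 * (x : ℝ) ^ n := by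
    have htail : |P - M| ≤ 2 / (x : ℝ) := StmtAux.tail_bound n x hn hx
    have hxs : (0 : ℝ) ≤ (x : ℝ) ^ (n + 1) := by positivity
    have h1 : |(x : ℝ) ^ (n + 1) / ((n : ℝ) + 1)| ≤ (x : ℝ) ^ (n + 1) := by
      rw [abs_of_nonneg (by positivity)]
      apply div_le_self hxs
      have : (0 : ℝ) ≤ (n : ℝ) := Nat.cast_nonneg n
      linarith
    calc |(x : ℝ) ^ (n + 1) / ((n : ℝ) + 1) * (P - M)|
        = |(x : ℝ) ^ (n + 1) / ((n : ℝ) + 1)| * |P - M| := abs_mul _ _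
      _ ≤ (x : ℝ) ^ (n + 1) * (2 / (x : ℝ)) :=
          mul_le_mul h1 htail (abs_nonneg _) hxs
      _ = 2 * (x : ℝ) ^ n := by
          rw [pow_succ]
          field_simp
  calc |(∑ k ∈ Finset.Icc 1 x, phiN n k) - (x : ℝ) ^ (n + 1) / (((n : ℝ) + 1) * Z)|
      ≤ |(∑ d ∈ Icc 1 x, (μ d : ℝ) *
          ((∑ q ∈ Icc 1 (x / d), (q : ℝ) ^ n) - ((x / d : ℕ) : ℝ) ^ (n + 1) / ((n : ℝ) + 1)))
        + (∑ d ∈ Icc 1 x, (μ d : ℝ) *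
            ((((x / d : ℕ) : ℝ) ^ (n + 1) - ((x : ℝ) / (d : ℝ)) ^ (n + 1)) / ((n : ℝ) + 1)))|
        + |(x : ℝ) ^ (n + 1) / ((n : ℝ) + 1) * (P - M)| := by
        rw [hsplit]; exact abs_add_le _ _
    _ ≤ |∑ d ∈ Icc 1 x, (μ d : ℝ) *
          ((∑ q ∈ Icc 1 (x / d), (q : ℝ) ^ n) - ((x / d : ℕ) : ℝ) ^ (n + 1) / ((n : ℝ) + 1))|
        + |∑ d ∈ Icc 1 x, (μ d : ℝ) *
            ((((x / d : ℕ) : ℝ) ^ (n + 1) - ((x : ℝ) / (d : ℝ)) ^ (n + 1)) / ((n : ℝ) + 1))|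
        + |(x : ℝ) ^ (n + 1) / ((n : ℝ) + 1) * (P - M)| := by
        have := abs_add_le (∑ d ∈ Icc 1 x, (μ d : ℝ) *
          ((∑ q ∈ Icc 1 (x / d), (q : ℝ) ^ n) - ((x / d : ℕ) : ℝ) ^ (n + 1) / ((n : ℝ) + 1)))
          (∑ d ∈ Icc 1 x, (μ d : ℝ) *
            ((((x / d : ℕ) : ℝ) ^ (n + 1) - ((x : ℝ) / (d : ℝ)) ^ (n + 1)) / ((n : ℝ) + 1)))
        linarith
    _ ≤ (x : ℝ) ^ n * C + (x : ℝ) ^ n * C + 2 * (x : ℝ) ^ n := by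
        linarith [hbound1, hbound2, hbound3]
    _ = (2 * C + 2) * (x : ℝ) ^ n := by ring
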